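/- Let K be a triangle with vertex S opposite to edge F, with outward normal vector S⃗_F of F scaled so |S⃗_F| = |F|. Let ψ_F = 1 − 2λ_S be the Crouzeix–Raviart basis function of F (λ_S the barycentric coordinate of S). Then the lowest-order Raviart–Thomas interpolant of ψ_F·e_{d'} on K is given by (Π_{RT₀}(ψ_F e_{d'}))|_K(x) = (2|K|)⁻¹ (x − S)(S⃗_F · e_{d'}). -/

import Mathlib

open MeasureTheory
open scoped RealInnerProductSpace

lemma tri2_vol : volume {p : ℝ × ℝ | 0 ≤ p.1 ∧ 0 ≤ p.2 ∧ p.1 + p.2 ≤ 1} = ENNReal.ofReal (1/2) := by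
  have hT : MeasurableSet {p : ℝ × ℝ | 0 ≤ p.1 ∧ 0 ≤ p.2 ∧ p.1 + p.2 ≤ 1} := by
    apply MeasurableSet.inter
    · exact measurableSet_le measurable_const measurable_fst
    · exact (measurableSet_le measurable_const measurable_snd).inter
        (measurableSet_le (measurable_fst.add measurable_snd) measurable_const)
  rw [MeasureTheory.Measure.volume_eq_prod, Measure.prod_apply hT]
  have hslice : (fun x : ℝ => volume (Prod.mk x ⁻¹' {p : ℝ × ℝ | 0 ≤ p.1 ∧ 0 ≤ p.2 ∧ p.1 + p.2 ≤ 1}))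
      = fun x => Set.indicator (Set.Icc (0:ℝ) 1) (fun x => ENNReal.ofReal (1 - x)) x := by
    funext x
    by_cases hx : x ∈ Set.Icc (0:ℝ) 1
    · rw [Set.indicator_of_mem hx]
      have : Prod.mk x ⁻¹' {p : ℝ × ℝ | 0 ≤ p.1 ∧ 0 ≤ p.2 ∧ p.1 + p.2 ≤ 1} = Set.Icc 0 (1 - x) := by
        ext y
        simp only [Set.mem_preimage, Set.mem_setOf_eq, Set.mem_Icc]
        constructor
        · rintro ⟨_, h2, h3⟩; exact ⟨h2, by linarith⟩
        · rintro ⟨h2, h3⟩; exact ⟨hx.1, h2, by linarith⟩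
      rw [this, Real.volume_Icc]; norm_num
    · have : Prod.mk x ⁻¹' {p : ℝ × ℝ | 0 ≤ p.1 ∧ 0 ≤ p.2 ∧ p.1 + p.2 ≤ 1} = ∅ := by
        ext y
        simp only [Set.mem_preimage, Set.mem_setOf_eq, Set.mem_empty_iff_false, iff_false]
        rintro ⟨h1, h2, h3⟩
        simp only [Set.mem_Icc, not_and_or, not_le] at hx
        rcases hx with h | h
        · linarith
        · linarith
      rw [this, Set.indicator_of_notMem hx]; simp
  rw [hslice, lintegral_indicator measurableSet_Icc]
  rw [← ofReal_integral_eq_lintegral_ofReal]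
  · rw [MeasureTheory.integral_Icc_eq_integral_Ioc, ← intervalIntegral.integral_of_le zero_le_one]
    norm_num [intervalIntegral.integral_sub intervalIntegrable_const intervalIntegral.intervalIntegrable_id,
      integral_id]
  · exact (continuous_const.sub continuous_id).integrableOn_Icc
  · filter_upwards [ae_restrict_mem measurableSet_Icc] with x hx
    simp only [Set.mem_Icc] at hx
    simp only [Pi.zero_apply]
    linarith [hx.2]

lemma triE_vol :
    volume {x : EuclideanSpace ℝ (Fin 2) | 0 ≤ x 0 ∧ 0 ≤ x 1 ∧ x 0 + x 1 ≤ 1} = ENNReal.ofReal (1/2) := by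
  have hmp := (MeasureTheory.volume_preserving_piFinTwo (fun _ : Fin 2 => ℝ)).comp
    (EuclideanSpace.volume_preserving_symm_measurableEquiv_toLp (Fin 2))
  have hT : MeasurableSet {p : ℝ × ℝ | 0 ≤ p.1 ∧ 0 ≤ p.2 ∧ p.1 + p.2 ≤ 1} := by
    apply MeasurableSet.inter
    · exact measurableSet_le measurable_const measurable_fst
    · exact (measurableSet_le measurable_const measurable_snd).inter
        (measurableSet_le (measurable_fst.add measurable_snd) measurable_const)
  have := hmp.measure_preimage hT.nullMeasurableSet
  have hpre : (⇑(MeasurableEquiv.piFinTwo fun _ : Fin 2 => ℝ) ∘ ⇑(MeasurableEquiv.toLp 2 (Fin 2 → ℝ)).symm) ⁻¹'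
      {p : ℝ × ℝ | 0 ≤ p.1 ∧ 0 ≤ p.2 ∧ p.1 + p.2 ≤ 1}
      = {x : EuclideanSpace ℝ (Fin 2) | 0 ≤ x 0 ∧ 0 ≤ x 1 ∧ x 0 + x 1 ≤ 1} := rfl
  rw [hpre] at this
  rw [this, tri2_vol]

lemma hullE : convexHull ℝ {(0 : EuclideanSpace ℝ (Fin 2)), EuclideanSpace.single 0 1, EuclideanSpace.single 1 1}
    = {x : EuclideanSpace ℝ (Fin 2) | 0 ≤ x 0 ∧ 0 ≤ x 1 ∧ x 0 + x 1 ≤ 1} := by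
  apply Set.Subset.antisymm
  · apply convexHull_min
    · rintro x (rfl | rfl | rfl) <;>
        simp [Set.mem_setOf_eq, EuclideanSpace.single_apply]
    · intro x hx y hy a b ha hb hab
      obtain ⟨hx0, hx1, hxs⟩ := hx
      obtain ⟨hy0, hy1, hys⟩ := hy
      refine ⟨?_, ?_, ?_⟩ <;>
        simp only [PiLp.add_apply, PiLp.smul_apply, smul_eq_mul] <;> nlinarith
  · rintro x ⟨h0, h1, hs⟩
    have hx' : x = ∑ i : Fin 3, (![1 - x 0 - x 1, x 0, x 1] i) •
        (![0, EuclideanSpace.single 0 1, EuclideanSpace.single 1 1] i) := by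
      refine PiLp.ext fun j => ?_
      fin_cases j <;>
        simp [Fin.sum_univ_three, EuclideanSpace.single_apply, PiLp.add_apply, PiLp.smul_apply]
    rw [hx']
    apply Convex.sum_mem (convex_convexHull ℝ _)
    · intro i _
      fin_cases i <;> simp <;> linarith
    · simp [Fin.sum_univ_three]; ring
    · intro i _
      apply subset_convexHull
      fin_cases i <;> simp

lemma tri_area (A u v : EuclideanSpace ℝ (Fin 2)) :
    volume (convexHull ℝ {A, A + u, A + v}) = ENNReal.ofReal (|u 0 * v 1 - u 1 * v 0| / 2) := by
  classical
  set b := (EuclideanSpace.basisFun (Fin 2) ℝ).toBasis with hb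
  set M : Matrix (Fin 2) (Fin 2) ℝ := Matrix.of ![![u 0, v 0], ![u 1, v 1]] with hM
  set T : EuclideanSpace ℝ (Fin 2) →ₗ[ℝ] EuclideanSpace ℝ (Fin 2) := Matrix.toLin b b M with hTdef
  have hbi : ∀ i, b i = EuclideanSpace.single i 1 := by
    intro i; rw [hb, OrthonormalBasis.coe_toBasis, EuclideanSpace.basisFun_apply]
  have hTu : T (EuclideanSpace.single 0 1) = u := by
    rw [← hbi 0, hTdef, Matrix.toLin_self]
    refine PiLp.ext fun j => ?_
    fin_cases j <;> simp [Fin.sum_univ_two, hbi, M, EuclideanSpace.single_apply]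
  have hTv : T (EuclideanSpace.single 1 1) = v := by
    rw [← hbi 1, hTdef, Matrix.toLin_self]
    refine PiLp.ext fun j => ?_
    fin_cases j <;> simp [Fin.sum_univ_two, hbi, M, EuclideanSpace.single_apply]
  set F : EuclideanSpace ℝ (Fin 2) →ᵃ[ℝ] EuclideanSpace ℝ (Fin 2) :=
    (AffineEquiv.constVAdd ℝ (EuclideanSpace ℝ (Fin 2)) A).toAffineMap.comp T.toAffineMap with hF
  have hFx : ∀ x, F x = A + T x := fun x => rfl
  have himg : {A, A + u, A + v} =
      ⇑F '' {(0 : EuclideanSpace ℝ (Fin 2)), EuclideanSpace.single 0 1, EuclideanSpace.single 1 1} := by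
    simp only [Set.image_insert_eq, Set.image_singleton, hFx, map_zero, hTu, hTv, add_zero]
  rw [himg, ← AffineMap.image_convexHull, hullE]
  have hsplit : ⇑F '' {x : EuclideanSpace ℝ (Fin 2) | 0 ≤ x 0 ∧ 0 ≤ x 1 ∧ x 0 + x 1 ≤ 1}
      = (fun y => A + y) '' (⇑T '' {x : EuclideanSpace ℝ (Fin 2) | 0 ≤ x 0 ∧ 0 ≤ x 1 ∧ x 0 + x 1 ≤ 1}) := by
    rw [← Set.image_comp]; rfl
  rw [hsplit]
  have htrans : ∀ s : Set (EuclideanSpace ℝ (Fin 2)), volume ((fun y => A + y) '' s) = volume s := by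
    intro s
    have : (fun y => A + y) '' s = (fun y => -A + y) ⁻¹' s := by
      ext z; simp [Set.mem_image, Set.mem_preimage]
    rw [this, measure_preimage_add]
  rw [htrans, Measure.addHaar_image_linearMap, triE_vol, hTdef, LinearMap.det_toLin, hM]
  rw [Matrix.det_fin_two]
  rw [← ENNReal.ofReal_mul (by positivity)]
  congr 1
  simp [Matrix.of_apply]
  ring_nf

/-- Explicit formula for the lowest-order Raviart–Thomas interpolant of a Crouzeix–Raviart
vector basis function on a triangle: the field `x ↦ (2|K|)⁻¹ (𝒮_F·e_{d'}) (x − S)` matches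
the facet-mean normal traces of `ψ_F e_{d'}` on every edge, where `ψ_F = 1 − 2λ_S`,
`S` is the vertex opposite `F` and `𝒮_F` is the outward normal of `F` with `|𝒮_F| = |F|`. -/
theorem stmt_19 (S : Fin 3 → EuclideanSpace ℝ (Fin 2)) (hS : AffineIndependent ℝ S)
    (lam : Fin 3 → (EuclideanSpace ℝ (Fin 2) →ᵃ[ℝ] ℝ))
    (hlam : ∀ i j : Fin 3, lam i (S j) = if i = j then 1 else 0)
    (n : Fin 3 → EuclideanSpace ℝ (Fin 2))
    (hperp : ∀ m : Fin 3, ⟪n m, S (m + 2) - S (m + 1)⟫ = 0)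
    (hunit : ∀ m : Fin 3, ‖n m‖ = 1)
    (hout : ∀ m : Fin 3, 0 < ⟪n m, S (m + 1) - S m⟫)
    (k : Fin 3) (d' : Fin 2)
    (SF : EuclideanSpace ℝ (Fin 2)) (hSF : SF = ‖S (k + 2) - S (k + 1)‖ • n k)
    (area : ℝ) (harea : area = (volume (convexHull ℝ (Set.range S))).toReal)
    (e : EuclideanSpace ℝ (Fin 2)) (he : e = EuclideanSpace.single d' (1 : ℝ))
    (ψ : EuclideanSpace ℝ (Fin 2) → ℝ) (hψ : ψ = fun x => 1 - 2 * lam k x)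
    (R : EuclideanSpace ℝ (Fin 2) → EuclideanSpace ℝ (Fin 2))
    (hR : R = fun x => ((2 * area)⁻¹ * ⟪SF, e⟫) • (x - S k)) :
    ∀ m : Fin 3,
      ‖S (m + 2) - S (m + 1)‖ *
          ∫ t in (0:ℝ)..1, ⟪R ((1 - t) • S (m + 1) + t • S (m + 2)), n m⟫ =
      ‖S (m + 2) - S (m + 1)‖ *
          ∫ t in (0:ℝ)..1, ψ ((1 - t) • S (m + 1) + t • S (m + 2)) * ⟪e, n m⟫ := by
  intro m
  -- notation
  set c : ℝ := (2 * area)⁻¹ * ⟪SF, e⟫ with hc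
  set u : EuclideanSpace ℝ (Fin 2) := S (k + 1) - S k with hu
  set v : EuclideanSpace ℝ (Fin 2) := S (k + 2) - S k with hv
  set w : EuclideanSpace ℝ (Fin 2) := S (k + 2) - S (k + 1) with hw
  -- area formula: 2 * area = ‖w‖ * ⟪n k, u⟫
  have hrange : Set.range S = {S k, S k + u, S k + v} := by
    have h3 : ∀ k i : Fin 3, i = k ∨ i = k + 1 ∨ i = k + 2 := by decide
    have e1 : S k + u = S (k + 1) := by rw [hu]; abel
    have e2 : S k + v = S (k + 2) := by rw [hv]; abel
    rw [e1, e2]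
    ext x
    simp only [Set.mem_range, Set.mem_insert_iff, Set.mem_singleton_iff]
    constructor
    · rintro ⟨i, rfl⟩
      rcases h3 k i with rfl | rfl | rfl
      · exact Or.inl rfl
      · exact Or.inr (Or.inl rfl)
      · exact Or.inr (Or.inr rfl)
    · rintro (rfl | rfl | rfl)
      exacts [⟨k, rfl⟩, ⟨k + 1, rfl⟩, ⟨k + 2, rfl⟩]
  have hareaval : area = |u 0 * v 1 - u 1 * v 0| / 2 := by
    rw [harea, hrange, tri_area, ENNReal.toReal_ofReal (by positivity)]
  -- coordinates facts
  have hinner : ∀ x y : EuclideanSpace ℝ (Fin 2), ⟪x, y⟫ = x 0 * y 0 + x 1 * y 1 := by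
    intro x y
    rw [PiLp.inner_apply, Fin.sum_univ_two]
    simp [RCLike.inner_apply, conj_trivial]
    ring
  have hperpk : n k 0 * w 0 + n k 1 * w 1 = 0 := by
    have := hperp k; rw [hinner] at this; linarith
  have hunitk : n k 0 ^ 2 + n k 1 ^ 2 = 1 := by
    have := hunit k
    rw [EuclideanSpace.norm_eq, Fin.sum_univ_two] at this
    have := Real.sqrt_eq_one.mp this
    simpa [Real.norm_eq_abs, sq_abs] using this
  have houtk : 0 < n k 0 * u 0 + n k 1 * u 1 := by
    have := hout k; rw [hinner] at this; rw [hu]; linarith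
  have hwne : w ≠ 0 := by
    rw [hw, sub_ne_zero]
    have h21 : ∀ j : Fin 3, j + 2 ≠ j + 1 := by decide
    exact hS.injective.ne (h21 k)
  have hnormw : ‖w‖ = |n k 0 * w 1 - n k 1 * w 0| := by
    have ht2 : (n k 0 * w 1 - n k 1 * w 0) ^ 2 = w 0 ^ 2 + w 1 ^ 2 := by
      linear_combination (w 0 ^ 2 + w 1 ^ 2) * hunitk - (n k 0 * w 0 + n k 1 * w 1) * hperpk
    rw [EuclideanSpace.norm_eq, Fin.sum_univ_two]
    simp only [Real.norm_eq_abs, sq_abs]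
    rw [← ht2, Real.sqrt_sq_eq_abs]
  have hdet : u 0 * v 1 - u 1 * v 0 = (n k 0 * u 0 + n k 1 * u 1) * (n k 0 * w 1 - n k 1 * w 0) := by
    have hwc0 : w 0 = v 0 - u 0 := by rw [hw, hu, hv]; simp [PiLp.sub_apply]
    have hwc1 : w 1 = v 1 - u 1 := by rw [hw, hu, hv]; simp [PiLp.sub_apply]
    rw [hwc0, hwc1] at hperpk ⊢
    linear_combination (n k 1 * u 0 - n k 0 * u 1) * hperpk -
      (u 0 * v 1 - u 1 * v 0) * hunitk
  have harea2 : 2 * area = ‖w‖ * ⟪n k, u⟫ := by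
    rw [hareaval, hinner, hnormw, hdet]
    rw [abs_mul, abs_of_pos houtk]
    ring
  have hwpos : 0 < ‖w‖ := norm_pos_iff.mpr hwne
  have h2area_pos : 0 < 2 * area := by
    rw [harea2]; rw [hinner]; exact mul_pos hwpos houtk
  -- the key constant computation
  have hkey : c * ⟪S (k + 1) - S k, n k⟫ = ⟪e, n k⟫ := by
    have h1 : ⟪SF, e⟫ = ‖w‖ * ⟪n k, e⟫ := by rw [hSF, real_inner_smul_left]
    have h2 : ⟪S (k + 1) - S k, n k⟫ = ⟪n k, u⟫ := by rw [← hu, real_inner_comm]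
    rw [hc, h1, h2, real_inner_comm e (n k), harea2]
    have hD : ⟪n k, u⟫ ≠ 0 := by rw [hinner]; exact ne_of_gt houtk
    field_simp
  -- integral computations
  have hwm0 : ⟪S (m + 2) - S (m + 1), n m⟫ = 0 := by rw [real_inner_comm]; exact hperp m
  have hLf : ∀ t : ℝ, ⟪R ((1 - t) • S (m + 1) + t • S (m + 2)), n m⟫
      = c * ⟪S (m + 1) - S k, n m⟫ := by
    intro t
    have hx : ((1 - t) • S (m + 1) + t • S (m + 2) : EuclideanSpace ℝ (Fin 2)) - S k
        = (S (m + 1) - S k) + t • (S (m + 2) - S (m + 1)) := by module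
    rw [hR]
    simp only
    rw [hx, inner_smul_left, inner_add_left, real_inner_smul_left, hwm0]
    simp
  have hlam' : ∀ t : ℝ, lam k ((1 - t) • S (m + 1) + t • S (m + 2)) =
      (1 - t) * lam k (S (m + 1)) + t * lam k (S (m + 2)) := by
    intro t
    rw [show ((1 - t) • S (m + 1) + t • S (m + 2) : EuclideanSpace ℝ (Fin 2))
        = AffineMap.lineMap (S (m + 1)) (S (m + 2)) t from (AffineMap.lineMap_apply_module _ _ _).symm,
      AffineMap.apply_lineMap, AffineMap.lineMap_apply_module]
    simp [smul_eq_mul]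
  by_cases hmk : m = k
  · subst hmk
    have hne1 : ∀ j : Fin 3, j ≠ j + 1 := by decide
    have hne2 : ∀ j : Fin 3, j ≠ j + 2 := by decide
    have hRf : ∀ t : ℝ, ψ ((1 - t) • S (m + 1) + t • S (m + 2)) * ⟪e, n m⟫ = ⟪e, n m⟫ := by
      intro t
      rw [hψ]
      simp only
      rw [hlam' t, hlam m (m + 1), hlam m (m + 2), if_neg (hne1 m), if_neg (hne2 m)]
      ring
    simp only [hLf, hRf, intervalIntegral.integral_const, sub_zero, one_smul]
    rw [hkey]
  · have hk12 : k = m + 1 ∨ k = m + 2 :=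
      (by decide : ∀ m k : Fin 3, ¬ m = k → k = m + 1 ∨ k = m + 2) m k hmk
    have hint1 : (∫ t in (0:ℝ)..1, (2 * t - 1)) = 0 := by
      rw [intervalIntegral.integral_sub (intervalIntegral.intervalIntegrable_id.const_mul 2) intervalIntegrable_const,
        intervalIntegral.integral_const_mul, integral_id, intervalIntegral.integral_const]
      norm_num
    rcases hk12 with rfl | rfl
    · -- k = m + 1
      have hne12 : (m + 1 : Fin 3) ≠ m + 2 := by
        have : ∀ j : Fin 3, j + 1 ≠ j + 2 := by decide
        exact this m
      have hRf : ∀ t : ℝ, ψ ((1 - t) • S (m + 1) + t • S (m + 2)) * ⟪e, n m⟫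
          = (2 * t - 1) * ⟪e, n m⟫ := by
        intro t
        rw [hψ]
        simp only
        rw [hlam' t, hlam (m + 1) (m + 1), hlam (m + 1) (m + 2), if_pos rfl, if_neg hne12]
        ring
      simp only [hLf, hRf, sub_self, inner_zero_left, mul_zero,
        intervalIntegral.integral_const, smul_zero]
      rw [intervalIntegral.integral_mul_const, hint1]
      simp
    · -- k = m + 2
      have hne21 : (m + 2 : Fin 3) ≠ m + 1 := by
        have : ∀ j : Fin 3, j + 2 ≠ j + 1 := by decide
        exact this m
      have hRf : ∀ t : ℝ, ψ ((1 - t) • S (m + 1) + t • S (m + 2)) * ⟪e, n m⟫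
          = (1 - 2 * t) * ⟪e, n m⟫ := by
        intro t
        rw [hψ]
        simp only
        rw [hlam' t, hlam (m + 2) (m + 1), hlam (m + 2) (m + 2), if_pos rfl, if_neg hne21]
        ring
      have hzero : ⟪S (m + 1) - S (m + 2), n m⟫ = 0 := by
        rw [show S (m + 1) - S (m + 2) = -(S (m + 2) - S (m + 1)) by abel, inner_neg_left, hwm0]
        simp
      have hint2 : (∫ t in (0:ℝ)..1, (1 - 2 * t)) = 0 := by
        rw [intervalIntegral.integral_sub intervalIntegrable_const (intervalIntegral.intervalIntegrable_id.const_mul 2),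
          intervalIntegral.integral_const_mul, integral_id, intervalIntegral.integral_const]
        norm_num
      simp only [hLf, hRf, hzero, mul_zero, intervalIntegral.integral_const, smul_zero]
      rw [intervalIntegral.integral_mul_const, hint2]
      simp
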